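/- Fix reals α, β, λ, μ > 0. For the four-state Markov-machine chain (defined in the context, corresponding to the case β = γ), let π be a probability vector satisfying the balance equations πQ = 0. Then the false rejection ratio satisfies FRR := π_{(0,1)}/(π_{(0,1)}+π_{(1,1)}) = β/(μ+α+β). -/
import Mathlib


/-- The generator matrix of the four-state Markov-machine chain (case β = γ), with states
indexed 0=(0,0), 1=(1,0), 2=(0,1), 3=(1,1). -/
noncomputable def mmGen4 (α β lam μ : ℝ) : Matrix (Fin 4) (Fin 4) ℝ :=
  !![-(α + lam), α,              0,        lam;
     β,          -(β + μ + lam), 0,        μ + lam;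
     μ,          0,              -(α + μ), α;
     0,          0,              β,        -β]

/-- For the four-state Markov-machine chain with stationary distribution π,
FRR = π_{(0,1)}/(π_{(0,1)} + π_{(1,1)}) = β/(μ+α+β). -/
theorem frr_closed_form_four_state
    (α β lam μ : ℝ) (hα : 0 < α) (hβ : 0 < β) (hlam : 0 < lam) (hμ : 0 < μ)
    (π : Fin 4 → ℝ) (hπnn : ∀ s, 0 ≤ π s) (hπsum : ∑ s, π s = 1)
    (hbal : ∀ j, ∑ i, π i * mmGen4 α β lam μ i j = 0) :
    π 2 / (π 2 + π 3) = β / (μ + α + β) := by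
  have h2 := hbal 2
  have h3 := hbal 3
  simp [mmGen4, Fin.sum_univ_four] at h2 h3
  -- h2: π 2 * -(α+μ) + π 3 * β = 0
  have hrel : β * π 3 = (α + μ) * π 2 := by linarith
  have hπ2 : 0 < π 2 := by
    rcases lt_or_eq_of_le (hπnn 2) with h | h
    · exact h
    · exfalso
      have h20 : π 2 = 0 := h.symm
      have h30 : π 3 = 0 := by
        have : β * π 3 = 0 := by rw [hrel, h20]; ring
        rcases mul_eq_zero.mp this with h' | h'
        · exact absurd h' (ne_of_gt hβ)
        · exact h'
      have h0 : π 0 = 0 := by nlinarith [hπnn 0, hπnn 1]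
      have h1 : π 1 = 0 := by nlinarith [hπnn 0, hπnn 1]
      rw [Fin.sum_univ_four] at hπsum
      rw [h0, h1, h20, h30] at hπsum
      norm_num at hπsum
  have hπ3 : π 3 = (α + μ) * π 2 / β := by field_simp; linarith
  rw [hπ3]
  rw [div_eq_div_iff (by positivity) (by positivity)]
  field_simp
  ring
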